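/- Fix t₀ > 256 and K ≥ 4.5, and define F(t,z) = e^{−z}·e^{−z²/(4(t+t₀))}·e^{(z²/(t+t₀) − K)/√(t+t₀)} for t ≥ 0, z ∈ ℝ. Then for all t ≥ 0 and all z ≥ 0, F_t(t,z) − F_zz(t,z) − (2 − 1/(2(t+t₀)))·F_z(t,z) − F(t,z) ≥ 0. -/

import Mathlib

set_option maxHeartbeats 1000000 in
/-- The Gaussian-corrected exponential F = E·G·H is a supersolution of the
pushmi-pullyu moving-frame operator on {z ≥ 0}:
F_t − F_zz − (2 − 1/(2(t+t₀)))F_z − F ≥ 0. -/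
theorem stmt14 (t₀ K : ℝ) (ht₀ : 256 < t₀) (hK : 4.5 ≤ K)
    (F : ℝ → ℝ → ℝ)
    (hF : ∀ t z : ℝ, F t z = Real.exp (-z) * Real.exp (-z^2 / (4*(t + t₀))) *
        Real.exp ((z^2 / (t + t₀) - K) / Real.sqrt (t + t₀))) :
    ∀ t ≥ (0:ℝ), ∀ z ≥ (0:ℝ),
      deriv (fun s => F s z) t - deriv (deriv (F t)) z
        - (2 - 1/(2*(t + t₀))) * deriv (F t) z - F t z ≥ 0 := by
  intro t ht z hz
  have hτ : (0:ℝ) < t + t₀ := by linarith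
  have hτ' : t + t₀ ≠ 0 := ne_of_gt hτ
  set s := Real.sqrt (t + t₀) with hs_def
  have hspos : 0 < s := Real.sqrt_pos.mpr hτ
  have hs_ne : s ≠ 0 := ne_of_gt hspos
  have hs2 : s^2 = t + t₀ := Real.sq_sqrt hτ.le
  have hs16 : 16 < s := by
    have h256 : Real.sqrt 256 = 16 := by
      rw [show (256:ℝ) = 16^2 by norm_num, Real.sqrt_sq (by norm_num : (0:ℝ) ≤ 16)]
    have := Real.sqrt_lt_sqrt (by norm_num : (0:ℝ) ≤ 256) (by linarith : (256:ℝ) < t + t₀)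
    rw [h256] at this
    exact this
  -- F as a single exponential
  have hFg : ∀ a b : ℝ, F a b =
      Real.exp (-b + -b^2/(4*(a+t₀)) + (b^2/(a+t₀) - K)/Real.sqrt (a+t₀)) := by
    intro a b
    rw [hF, ← Real.exp_add, ← Real.exp_add]
  -- z-derivative of F t at any point w
  have hgz : ∀ w : ℝ,
      HasDerivAt (fun w => Real.exp (-w + -w^2/(4*(t+t₀)) + (w^2/(t+t₀) - K)/s))
        (Real.exp (-w + -w^2/(4*(t+t₀)) + (w^2/(t+t₀) - K)/s) *
          (-1 - w/(2*(t+t₀)) + 2*w/((t+t₀)*s))) w := by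
    intro w
    have h2 : HasDerivAt (fun w : ℝ => w^2) (2*w) w := by simpa using hasDerivAt_pow 2 w
    have hinner : HasDerivAt (fun w : ℝ => -w + -w^2/(4*(t+t₀)) + (w^2/(t+t₀) - K)/s)
        (-1 - w/(2*(t+t₀)) + 2*w/((t+t₀)*s)) w := by
      have h := ((hasDerivAt_id w).neg.add (h2.neg.div_const (4*(t+t₀)))).add
        (((h2.div_const (t+t₀)).sub_const K).div_const s)
      refine h.congr_deriv ?_
      field_simp
      ring
    exact hinner.exp
  have hFt_eq : F t = fun w => Real.exp (-w + -w^2/(4*(t+t₀)) + (w^2/(t+t₀) - K)/s) := by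
    funext w
    rw [hFg t w, ← hs_def]
  -- first z-derivative
  have hd1 : deriv (F t) = fun w =>
      Real.exp (-w + -w^2/(4*(t+t₀)) + (w^2/(t+t₀) - K)/s) *
        (-1 - w/(2*(t+t₀)) + 2*w/((t+t₀)*s)) := by
    funext w
    rw [hFt_eq]
    exact (hgz w).deriv
  -- second z-derivative
  have hP : HasDerivAt (fun w : ℝ => -1 - w/(2*(t+t₀)) + 2*w/((t+t₀)*s))
      (-(1/(2*(t+t₀))) + 2/((t+t₀)*s)) z := by
    have h := ((hasDerivAt_const z (-1:ℝ)).sub ((hasDerivAt_id z).div_const (2*(t+t₀)))).add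
      (((hasDerivAt_id z).const_mul (2:ℝ)).div_const ((t+t₀)*s))
    refine h.congr_deriv ?_
    ring
  have hd2 : deriv (deriv (F t)) z =
      Real.exp (-z + -z^2/(4*(t+t₀)) + (z^2/(t+t₀) - K)/s) *
        ((-1 - z/(2*(t+t₀)) + 2*z/((t+t₀)*s))^2 + (-(1/(2*(t+t₀))) + 2/((t+t₀)*s))) := by
    rw [hd1]
    have h := (hgz z).mul hP
    have := h.deriv
    simp only [Pi.mul_def] at this
    rw [this]
    ring
  -- t-derivative
  have hone : HasDerivAt (fun a : ℝ => a + t₀) 1 t := (hasDerivAt_id t).add_const t₀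
  have hA : HasDerivAt (fun a : ℝ => -z^2/(4*(a+t₀))) (z^2/(4*(t+t₀)^2)) t := by
    have h4 : HasDerivAt (fun a : ℝ => 4*(a+t₀)) (4*1) t := hone.const_mul 4
    have hne : 4*(t+t₀) ≠ 0 := by positivity
    have h := (hasDerivAt_const t (-z^2)).div h4 hne
    refine h.congr_deriv ?_
    field_simp
    ring
  have hu : HasDerivAt (fun a : ℝ => z^2/(a+t₀) - K) (-(z^2)/(t+t₀)^2) t := by
    have h := ((hasDerivAt_const t (z^2)).div hone hτ').sub_const K
    refine h.congr_deriv ?_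
    field_simp
    ring
  have hv : HasDerivAt (fun a : ℝ => Real.sqrt (a+t₀)) (1/(2*s)) t := by
    have h := (Real.hasDerivAt_sqrt hτ').comp t hone
    exact h.congr_deriv (by rw [← hs_def]; ring)
  have hB : HasDerivAt (fun a : ℝ => (z^2/(a+t₀) - K)/Real.sqrt (a+t₀))
      (-(3/2)*z^2/((t+t₀)^2*s) + K/(2*(t+t₀)*s)) t := by
    have h := hu.div hv (by rw [← hs_def]; exact hs_ne)
    refine h.congr_deriv ?_
    rw [← hs_def, ← hs2]
    field_simp
    ring
  have hdt : deriv (fun a => F a z) t =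
      Real.exp (-z + -z^2/(4*(t+t₀)) + (z^2/(t+t₀) - K)/s) *
        (z^2/(4*(t+t₀)^2) + (-(3/2)*z^2/((t+t₀)^2*s) + K/(2*(t+t₀)*s))) := by
    have hfun : (fun a => F a z) =
        fun a => Real.exp (-z + -z^2/(4*(a+t₀)) + (z^2/(a+t₀) - K)/Real.sqrt (a+t₀)) :=
      funext fun a => hFg a z
    rw [hfun]
    have h := (((hasDerivAt_const t (-z)).add hA).add hB).exp
    have := h.deriv
    simp only [Pi.add_apply] at this
    rw [this, ← hs_def]
    ring
  -- assemble
  rw [hdt, hd2, hd1, hFg t z, ← hs_def]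
  set E := Real.exp (-z + -z^2/(4*(t+t₀)) + (z^2/(t+t₀) - K)/s) with hE_def
  have hEpos : 0 < E := Real.exp_pos _
  have key : 0 ≤ (z^2/(4*(t+t₀)^2) + (-(3/2)*z^2/((t+t₀)^2*s) + K/(2*(t+t₀)*s)))
      - ((-1 - z/(2*(t+t₀)) + 2*z/((t+t₀)*s))^2 + (-(1/(2*(t+t₀))) + 2/((t+t₀)*s)))
      - (2 - 1/(2*(t+t₀))) * (-1 - z/(2*(t+t₀)) + 2*z/((t+t₀)*s)) - 1 := by
    rw [← hs2]
    have hexp : (z^2/(4*(s^2)^2) + (-(3/2)*z^2/((s^2)^2*s) + K/(2*(s^2)*s)))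
        - ((-1 - z/(2*(s^2)) + 2*z/((s^2)*s))^2 + (-(1/(2*(s^2))) + 2/((s^2)*s)))
        - (2 - 1/(2*(s^2))) * (-1 - z/(2*(s^2)) + 2*z/((s^2)*s)) - 1
        = (2*z^2*s - 16*z^2 - z*s^2 + 2*(K-4)*s^3 + 4*z*s)/(4*s^6) := by
      field_simp
      ring
    rw [hexp]
    apply div_nonneg _ (by positivity)
    have e1 : 0 ≤ z*z*(s-16) := mul_nonneg (mul_nonneg hz hz) (by linarith)
    have e2 : 0 ≤ s*(2*z-s)^2 := mul_nonneg hspos.le (sq_nonneg _)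
    have e3 : 0 ≤ z*s := mul_nonneg hz hspos.le
    have e4 : 0 ≤ (2*K - 8.25)*s^3 := mul_nonneg (by linarith) (by positivity)
    nlinarith [e1, e2, e3, e4]
  have hfactor : E * (z^2/(4*(t+t₀)^2) + (-(3/2)*z^2/((t+t₀)^2*s) + K/(2*(t+t₀)*s)))
      - E * ((-1 - z/(2*(t+t₀)) + 2*z/((t+t₀)*s))^2 + (-(1/(2*(t+t₀))) + 2/((t+t₀)*s)))
      - (2 - 1/(2*(t+t₀))) * (E * (-1 - z/(2*(t+t₀)) + 2*z/((t+t₀)*s))) - E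
      = E * ((z^2/(4*(t+t₀)^2) + (-(3/2)*z^2/((t+t₀)^2*s) + K/(2*(t+t₀)*s)))
        - ((-1 - z/(2*(t+t₀)) + 2*z/((t+t₀)*s))^2 + (-(1/(2*(t+t₀))) + 2/((t+t₀)*s)))
        - (2 - 1/(2*(t+t₀))) * (-1 - z/(2*(t+t₀)) + 2*z/((t+t₀)*s)) - 1) := by ring
  rw [ge_iff_le, hfactor]
  exact mul_nonneg hEpos.le key
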